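/- Let γ : [0,1] → ℝ² be a C¹ simple closed curve with nowhere-vanishing tangent, and let θ(t) denote a continuous determination of the angle between dγ/dt and the positive x-axis. Then the total variation ∫₀¹ θ′(t) dt equals ±2π (equal to 2π for positively oriented curves). -/

import Mathlib

open Complex Set

lemma exp_eq_exp_sub (a b : ℝ) (h : Complex.exp ((a:ℂ) * I) = Complex.exp ((b:ℂ) * I)) :
    ∃ n : ℤ, a - b = n * (2 * Real.pi) := by
  have h1 : Complex.exp (((a - b : ℝ) : ℂ) * I) = 1 := by
    push_cast
    rw [sub_mul, Complex.exp_sub, h, div_self (Complex.exp_ne_zero _)]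
  rw [Complex.exp_eq_one_iff] at h1
  obtain ⟨n, hn⟩ := h1
  refine ⟨n, ?_⟩
  have h2 : ((a - b : ℝ) : ℂ) * I = ((n * (2 * Real.pi) : ℝ) : ℂ) * I := by
    rw [hn]; push_cast; ring
  have h3 := mul_right_cancel₀ Complex.I_ne_zero h2
  exact_mod_cast h3

lemma lift_unique {θ₁ θ₂ : ℝ → ℝ} {s : Set ℝ} (hs : IsPreconnected s)
    (h₁ : ContinuousOn θ₁ s) (h₂ : ContinuousOn θ₂ s)
    (h : ∀ t ∈ s, Complex.exp ((θ₁ t : ℂ) * I) = Complex.exp ((θ₂ t : ℂ) * I))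
    {x y : ℝ} (hx : x ∈ s) (hy : y ∈ s) :
    θ₁ x - θ₂ x = θ₁ y - θ₂ y := by
  have hpi : (0:ℝ) < 2 * Real.pi := by positivity
  set D : ℝ → ℝ := fun t => (θ₁ t - θ₂ t) / (2 * Real.pi) with hD
  have hDint : ∀ t ∈ s, ∃ n : ℤ, D t = n := by
    intro t ht
    obtain ⟨n, hn⟩ := exp_eq_exp_sub _ _ (h t ht)
    exact ⟨n, by rw [hD]; field_simp [hn]; linarith [hn]⟩
  have hDcont : ContinuousOn D s := ((h₁.sub h₂).div_const _)
  -- image is preconnected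
  have himg : IsPreconnected (D '' s) := hs.image D hDcont
  have key : ∀ u ∈ s, ∀ v ∈ s, ¬ (D u < D v) := by
    intro u hu v hv hlt
    obtain ⟨nu, hnu⟩ := hDint u hu
    obtain ⟨nv, hnv⟩ := hDint v hv
    have hnuv : (nu : ℝ) < nv := by rw [← hnu, ← hnv]; exact hlt
    have hnuv' : nu < nv := by exact_mod_cast hnuv
    have hmem : (nu : ℝ) + 1/2 ∈ Icc (D u) (D v) := by
      constructor
      · rw [hnu]; linarith
      · rw [hnv]
        have : (nu : ℝ) + 1 ≤ nv := by exact_mod_cast hnuv'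
        linarith
    have := himg.Icc_subset ⟨u, hu, rfl⟩ ⟨v, hv, rfl⟩ hmem
    obtain ⟨t, ht, hDt⟩ := this
    obtain ⟨m, hm⟩ := hDint t ht
    rw [hm] at hDt
    have h1 : nu < m := by
      have : (nu : ℝ) < m := by linarith
      exact_mod_cast this
    have h2 : m < nu + 1 := by
      have : (m : ℝ) < nu + 1 := by linarith
      exact_mod_cast this
    omega
  have : D x = D y := by
    rcases lt_trichotomy (D x) (D y) with hl | he | hg
    · exact absurd hl (key x hx y hy)
    · exact he
    · exact absurd hg (key y hy x hx)
  have hx' : θ₁ x - θ₂ x = D x * (2 * Real.pi) := by rw [hD]; field_simp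
  have hy' : θ₁ y - θ₂ y = D y * (2 * Real.pi) := by rw [hD]; field_simp
  rw [hx', hy', this]

-- an interval of length ≥ 2π contains a point with sin = -1
lemma exists_sin_neg_one {x y : ℝ} (h : x + 2 * Real.pi ≤ y) :
    ∃ z ∈ Icc x y, Real.sin z = -1 := by
  have hpi : (0:ℝ) < 2 * Real.pi := by positivity
  set k : ℤ := ⌈(x + Real.pi / 2) / (2 * Real.pi)⌉ with hk
  refine ⟨2 * Real.pi * k - Real.pi / 2, ⟨?_, ?_⟩, ?_⟩
  · have h1 : (x + Real.pi / 2) / (2 * Real.pi) ≤ k := Int.le_ceil _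
    have h2 : x + Real.pi / 2 ≤ 2 * Real.pi * k := by
      rw [div_le_iff₀ hpi] at h1; linarith
    linarith
  · have h1 : (k : ℝ) < (x + Real.pi / 2) / (2 * Real.pi) + 1 := Int.ceil_lt_add_one _
    have h1' : ((k:ℝ) - 1) < (x + Real.pi / 2) / (2 * Real.pi) := by linarith
    rw [lt_div_iff₀ hpi] at h1'
    have h2 : 2 * Real.pi * k < x + Real.pi / 2 + 2 * Real.pi := by nlinarith
    have hple : Real.pi / 2 + Real.pi / 2 ≤ 2 * Real.pi := by
      have := Real.pi_pos; linarith
    linarith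
  · have : 2 * Real.pi * k - Real.pi / 2 = -(Real.pi/2) + k * (2 * Real.pi) := by ring
    rw [this, Real.sin_add_int_mul_two_pi, Real.sin_neg, Real.sin_pi_div_two]

lemma variation_lt_two_pi {φ : ℝ → ℝ} (hφ : ContinuousOn φ (Icc 0 1))
    (hsin : ∀ t ∈ Icc (0:ℝ) 1, 0 ≤ Real.sin (φ t)) :
    |φ 1 - φ 0| < 2 * Real.pi := by
  have hpi : (0:ℝ) < 2 * Real.pi := by positivity
  rw [abs_sub_lt_iff]
  constructor
  · by_contra hcon
    push_neg at hcon
    obtain ⟨z, hz, hsz⟩ := exists_sin_neg_one (show φ 0 + 2 * Real.pi ≤ φ 1 by linarith)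
    have hsub : Icc (φ 0) (φ 1) ⊆ φ '' (Icc 0 1) :=
      intermediate_value_Icc zero_le_one hφ
    obtain ⟨t, ht, hφt⟩ := hsub hz
    have := hsin t ht
    rw [hφt, hsz] at this
    linarith
  · by_contra hcon
    push_neg at hcon
    obtain ⟨z, hz, hsz⟩ := exists_sin_neg_one (show φ 1 + 2 * Real.pi ≤ φ 0 by linarith)
    have hsub : Icc (φ 1) (φ 0) ⊆ φ '' (Icc 0 1) :=
      intermediate_value_Icc' zero_le_one hφ
    obtain ⟨t, ht, hφt⟩ := hsub hz
    have := hsin t ht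
    rw [hφt, hsz] at this
    linarith

lemma lift_step {a b : ℂ} (hb : b ≠ 0) {α : ℝ} (hba : b = (‖b‖ : ℂ) * Complex.exp ((α : ℂ) * I)) :
    a = (‖a‖ : ℂ) * Complex.exp (((α + (a / b).arg : ℝ) : ℂ) * I) := by
  have h2 : ((‖a / b‖ : ℝ) : ℂ) * Complex.exp (((a/b).arg : ℂ) * I) = a / b := by
    exact Complex.norm_mul_exp_arg_mul_I (a/b)
  have hnorm : (‖a‖ : ℝ) = ‖b‖ * ‖a / b‖ := by
    rw [norm_div]; field_simp [norm_ne_zero_iff.mpr hb]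
  have hexp : Complex.exp (((α + (a / b).arg : ℝ) : ℂ) * I)
      = Complex.exp ((α : ℂ) * I) * Complex.exp (((a/b).arg : ℂ) * I) := by
    rw [← Complex.exp_add]; push_cast; ring_nf
  calc a = b * (a / b) := by field_simp
    _ = _ := by
        rw [hexp, hnorm]
        push_cast
        rw [show ((‖b‖:ℂ) * (‖a/b‖:ℂ)) * (Complex.exp ((α : ℂ) * I) * Complex.exp (((a/b).arg : ℂ) * I))
            = ((‖b‖:ℂ) * Complex.exp ((α : ℂ) * I)) * ((‖a/b‖:ℂ) * Complex.exp (((a/b).arg : ℂ) * I)) from by ring,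
          ← hba, h2]

lemma mem_slitPlane_of_close_one {w : ℂ} (h : ‖w - 1‖ < 1) : w ∈ Complex.slitPlane := by
  rw [Complex.mem_slitPlane_iff]
  left
  have h1 : |w.re - 1| ≤ ‖w - 1‖ := by
    have := Complex.abs_re_le_norm (w - 1)
    simpa [Complex.sub_re] using this
  have := abs_lt.mp (lt_of_le_of_lt h1 h)
  linarith [this.1]

lemma lift_exists {f : ℝ → ℂ} (hf : ContinuousOn f (Icc 0 1))
    (hne : ∀ t ∈ Icc (0:ℝ) 1, f t ≠ 0) :
    ∃ θ : ℝ → ℝ, ContinuousOn θ (Icc 0 1) ∧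
      ∀ t ∈ Icc (0:ℝ) 1, f t = (‖f t‖ : ℂ) * Complex.exp ((θ t : ℂ) * I) := by
  obtain ⟨z, hz, hzmin⟩ := isCompact_Icc.exists_isMinOn (⟨0, by norm_num⟩ : (Icc (0:ℝ) 1).Nonempty) hf.norm
  set m : ℝ := ‖f z‖ with hm
  have hm0 : 0 < m := norm_pos_iff.mpr (hne z hz)
  have hmle : ∀ t ∈ Icc (0:ℝ) 1, m ≤ ‖f t‖ := fun t ht => hzmin ht
  have huc := isCompact_Icc.uniformContinuousOn_of_continuous hf
  rw [Metric.uniformContinuousOn_iff] at huc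
  obtain ⟨δ, hδ0, hδ⟩ := huc m hm0
  obtain ⟨n, hn⟩ := exists_nat_one_div_lt hδ0
  set N : ℕ := n + 1 with hN
  have hN0 : (0:ℝ) < N := by positivity
  have hNδ : 1 / (N:ℝ) < δ := by exact_mod_cast hn
  -- key induction
  have key : ∀ k : ℕ, k ≤ N → ∃ θ : ℝ → ℝ, ContinuousOn θ (Icc 0 ((k:ℝ)/N)) ∧
      ∀ t ∈ Icc (0:ℝ) ((k:ℝ)/N), f t = (‖f t‖ : ℂ) * Complex.exp ((θ t : ℂ) * I) := by
    intro k
    induction k with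
    | zero =>
      intro _
      refine ⟨fun _ => (f 0).arg, continuousOn_const, ?_⟩
      intro t ht
      simp only [Nat.cast_zero, zero_div] at ht
      have ht0 : t = 0 := le_antisymm ht.2 ht.1
      subst ht0
      show f 0 = (‖f 0‖:ℂ) * Complex.exp (((f 0).arg : ℂ) * I)
      exact (Complex.norm_mul_exp_arg_mul_I (f 0)).symm
    | succ k ih =>
      intro hk1
      obtain ⟨θk, hθkc, hθk⟩ := ih (le_of_lt (Nat.lt_of_lt_of_le (Nat.lt_succ_self k) hk1))
      set c : ℝ := (k:ℝ)/N with hc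
      set c' : ℝ := ((k+1:ℕ):ℝ)/N with hc'
      have hc0 : 0 ≤ c := by positivity
      have hcc' : c ≤ c' := by
        rw [hc, hc']
        gcongr <;> push_cast <;> linarith
      have hc'1 : c' ≤ 1 := by
        rw [hc', div_le_one hN0]; exact_mod_cast hk1
      have hc1 : c ≤ 1 := le_trans hcc' hc'1
      have hcmem : c ∈ Icc (0:ℝ) 1 := ⟨hc0, hc1⟩
      have hfc : f c ≠ 0 := hne c hcmem
      have hc'c : c' - c = 1 / N := by rw [hc, hc']; push_cast; field_simp; ring
      -- key closeness
      have hclose : ∀ t ∈ Icc (0:ℝ) c', ‖f (max t c) / f c - 1‖ < 1 := by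
        intro t ht
        have hmax : max t c ∈ Icc (0:ℝ) 1 := ⟨le_max_of_le_right hc0, max_le (le_trans ht.2 hc'1) hc1⟩
        have hdist : dist (max t c) c < δ := by
          rw [Real.dist_eq, _root_.abs_of_nonneg (sub_nonneg.mpr (le_max_right t c))]
          have : max t c ≤ c' := max_le (ht.2) hcc'
          calc max t c - c ≤ c' - c := by linarith
            _ = 1 / N := hc'c
            _ < δ := hNδ
        have := hδ (max t c) hmax c hcmem hdist
        rw [dist_eq_norm] at this
        have hfcnorm : ‖f c‖ ≠ 0 := norm_ne_zero_iff.mpr hfc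
        rw [show f (max t c) / f c - 1 = (f (max t c) - f c) / f c from by field_simp, norm_div]
        rw [div_lt_one (norm_pos_iff.mpr hfc)]
        exact lt_of_lt_of_le this (hmle c hcmem)
      refine ⟨fun t => θk (min t c) + (f (max t c) / f c).arg, ?_, ?_⟩
      · apply ContinuousOn.add
        · apply hθkc.comp (continuous_id.min continuous_const).continuousOn
          intro t ht
          exact ⟨le_min ht.1 hc0, min_le_right _ _⟩
        · intro t ht
          have hw : ContinuousWithinAt (fun t => f (max t c) / f c) (Icc 0 c') t := by
            apply ContinuousWithinAt.div_const
            apply (hf.comp (continuous_id.max continuous_const).continuousOn ?_) t ht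
            intro u hu
            exact ⟨le_max_of_le_right hc0, max_le (le_trans hu.2 hc'1) hc1⟩
          show ContinuousWithinAt (Complex.arg ∘ fun t => f (max t c) / f c) (Icc 0 c') t
          apply ContinuousAt.comp_continuousWithinAt ?_ hw
          exact Complex.continuousAt_arg (mem_slitPlane_of_close_one (hclose t ht))
      · intro t ht
        show f t = (‖f t‖:ℂ) * Complex.exp ((((θk (min t c) + (f (max t c) / f c).arg) : ℝ) : ℂ) * I)
        rcases le_or_gt t c with htc | htc
        · have hmin : min t c = t := min_eq_left htc
          have hmax : max t c = c := max_eq_right htc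
          have : f t = (‖f t‖:ℂ) * Complex.exp ((θk t : ℂ) * I) := hθk t ⟨ht.1, htc⟩
          rw [hmin, hmax, div_self hfc, Complex.arg_one, add_zero]
          exact this
        · have hmin : min t c = c := min_eq_right (le_of_lt htc)
          have hmax : max t c = t := max_eq_left (le_of_lt htc)
          rw [hmin, hmax]
          exact lift_step hfc (hθk c ⟨hc0, le_refl c⟩)
  obtain ⟨θ, hθc, hθ⟩ := key N (le_refl N)
  have : ((N:ℝ)/N) = 1 := div_self (ne_of_gt hN0)
  rw [this] at hθc hθ
  exact ⟨θ, hθc, hθ⟩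
lemma exp_eq_of_lifts {f : ℝ → ℂ} {θ₁ θ₂ : ℝ → ℝ} {t : ℝ}
    (hfne : f t ≠ 0)
    (h1 : f t = (‖f t‖ : ℂ) * Complex.exp ((θ₁ t : ℂ) * I))
    (h2 : f t = (‖f t‖ : ℂ) * Complex.exp ((θ₂ t : ℂ) * I)) :
    Complex.exp ((θ₁ t : ℂ) * I) = Complex.exp ((θ₂ t : ℂ) * I) := by
  have hn : (‖f t‖ : ℂ) ≠ 0 := by
    simp only [ne_eq, Complex.ofReal_eq_zero, norm_eq_zero]
    exact hfne
  exact mul_left_cancel₀ hn (h1.symm.trans h2)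

lemma lift_variation_eq_of_close {f g : ℝ → ℂ} {θf θg : ℝ → ℝ}
    (hf : ContinuousOn f (Icc 0 1)) (hg : ContinuousOn g (Icc 0 1))
    (hclose : ∀ t ∈ Icc (0:ℝ) 1, ‖f t - g t‖ < ‖g t‖)
    (hθf : ContinuousOn θf (Icc 0 1)) (hθg : ContinuousOn θg (Icc 0 1))
    (hliftf : ∀ t ∈ Icc (0:ℝ) 1, f t = (‖f t‖ : ℂ) * Complex.exp ((θf t : ℂ) * I))
    (hliftg : ∀ t ∈ Icc (0:ℝ) 1, g t = (‖g t‖ : ℂ) * Complex.exp ((θg t : ℂ) * I))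
    (h0 : f 0 = g 0) (h1 : f 1 = g 1) :
    θf 1 - θf 0 = θg 1 - θg 0 := by
  have hgne : ∀ t ∈ Icc (0:ℝ) 1, g t ≠ 0 := by
    intro t ht hgt
    have := hclose t ht
    rw [hgt, sub_zero, norm_zero] at this
    exact (norm_nonneg _).not_gt this
  have hfne : ∀ t ∈ Icc (0:ℝ) 1, f t ≠ 0 := by
    intro t ht hft
    have := hclose t ht
    rw [hft, zero_sub, norm_neg] at this
    exact lt_irrefl _ this
  have hball : ∀ t ∈ Icc (0:ℝ) 1, ‖f t / g t - 1‖ < 1 := by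
    intro t ht
    rw [show f t / g t - 1 = (f t - g t) / g t from by rw [sub_div, div_self (hgne t ht)], norm_div,
      div_lt_one (norm_pos_iff.mpr (hgne t ht))]
    exact hclose t ht
  set θ' : ℝ → ℝ := fun t => θg t + (f t / g t).arg with hθ'
  have hθ'c : ContinuousOn θ' (Icc 0 1) := by
    apply hθg.add
    intro t ht
    have hw : ContinuousWithinAt (fun t => f t / g t) (Icc 0 1) t :=
      (hf t ht).div (hg t ht) (hgne t ht)
    show ContinuousWithinAt (Complex.arg ∘ fun t => f t / g t) (Icc 0 1) t
    apply ContinuousAt.comp_continuousWithinAt ?_ hw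
    exact Complex.continuousAt_arg (mem_slitPlane_of_close_one (hball t ht))
  have hliftf' : ∀ t ∈ Icc (0:ℝ) 1, f t = (‖f t‖ : ℂ) * Complex.exp ((θ' t : ℂ) * I) := by
    intro t ht
    show f t = (‖f t‖ : ℂ) * Complex.exp ((((θg t + (f t / g t).arg : ℝ)) : ℂ) * I)
    exact lift_step (hgne t ht) (hliftg t ht)
  have hkey := lift_unique isPreconnected_Icc hθf hθ'c
    (fun t ht => exp_eq_of_lifts (hfne t ht) (hliftf t ht) (hliftf' t ht))
    (Set.right_mem_Icc.mpr zero_le_one) (Set.left_mem_Icc.mpr zero_le_one)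
  have hθ'1 : θ' 1 = θg 1 := by
    rw [hθ']
    simp only
    rw [h1, div_self (hgne 1 (Set.right_mem_Icc.mpr zero_le_one)), Complex.arg_one, add_zero]
  have hθ'0 : θ' 0 = θg 0 := by
    rw [hθ']
    simp only
    rw [h0, div_self (hgne 0 (Set.left_mem_Icc.mpr zero_le_one)), Complex.arg_one, add_zero]
  rw [hθ'1, hθ'0] at hkey
  linarith

lemma homotopy_invariance {H : ℝ → ℝ → ℂ}
    (hH : ContinuousOn (fun p : ℝ × ℝ => H p.1 p.2) (Icc 0 1 ×ˢ Icc 0 1))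
    (hne : ∀ p ∈ (Icc (0:ℝ) 1 ×ˢ Icc (0:ℝ) 1), H p.1 p.2 ≠ 0)
    (hend0 : ∀ u ∈ Icc (0:ℝ) 1, H u 0 = H 0 0)
    (hend1 : ∀ u ∈ Icc (0:ℝ) 1, H u 1 = H 0 1)
    {θa θb : ℝ → ℝ}
    (hθa : ContinuousOn θa (Icc 0 1)) (hθb : ContinuousOn θb (Icc 0 1))
    (hlifta : ∀ t ∈ Icc (0:ℝ) 1, H 0 t = (‖H 0 t‖ : ℂ) * Complex.exp ((θa t : ℂ) * I))
    (hliftb : ∀ t ∈ Icc (0:ℝ) 1, H 1 t = (‖H 1 t‖ : ℂ) * Complex.exp ((θb t : ℂ) * I)) :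
    θb 1 - θb 0 = θa 1 - θa 0 := by
  have hK : IsCompact (Icc (0:ℝ) 1 ×ˢ Icc (0:ℝ) 1) := isCompact_Icc.prod isCompact_Icc
  have hKne : (Icc (0:ℝ) 1 ×ˢ Icc (0:ℝ) 1).Nonempty := ⟨(0,0), by norm_num⟩
  obtain ⟨z, hz, hzmin⟩ := hK.exists_isMinOn hKne hH.norm
  set m : ℝ := ‖H z.1 z.2‖ with hm
  have hm0 : 0 < m := norm_pos_iff.mpr (hne z hz)
  have hmle : ∀ p ∈ (Icc (0:ℝ) 1 ×ˢ Icc (0:ℝ) 1), m ≤ ‖H p.1 p.2‖ := fun p hp => hzmin hp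
  have huc := hK.uniformContinuousOn_of_continuous hH
  rw [Metric.uniformContinuousOn_iff] at huc
  obtain ⟨δ, hδ0, hδ⟩ := huc m hm0
  obtain ⟨n, hn⟩ := exists_nat_one_div_lt hδ0
  set N : ℕ := n + 1 with hN
  have hN0 : (0:ℝ) < N := by positivity
  have hNδ : 1 / (N:ℝ) < δ := by exact_mod_cast hn
  -- each slice is continuous and nonvanishing
  have hslice : ∀ u ∈ Icc (0:ℝ) 1, ContinuousOn (H u) (Icc 0 1) := by
    intro u hu
    have : ContinuousOn (fun t => (u, t)) (Icc (0:ℝ) 1) :=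
      (continuous_const.prodMk continuous_id).continuousOn
    exact hH.comp this (fun t ht => mk_mem_prod hu ht)
  have hslicene : ∀ u ∈ Icc (0:ℝ) 1, ∀ t ∈ Icc (0:ℝ) 1, H u t ≠ 0 :=
    fun u hu t ht => hne (u, t) (mk_mem_prod hu ht)
  have key : ∀ k : ℕ, k ≤ N → ∃ θ : ℝ → ℝ, ContinuousOn θ (Icc 0 1) ∧
      (∀ t ∈ Icc (0:ℝ) 1, H ((k:ℝ)/N) t = (‖H ((k:ℝ)/N) t‖ : ℂ) * Complex.exp ((θ t : ℂ) * I)) ∧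
      θ 1 - θ 0 = θa 1 - θa 0 := by
    intro k
    induction k with
    | zero =>
      intro _
      refine ⟨θa, hθa, ?_, rfl⟩
      have h00 : ((0:ℕ):ℝ)/(N:ℝ) = 0 := by simp
      rw [h00]
      exact hlifta
    | succ k ih =>
      intro hk1
      obtain ⟨θk, hθkc, hθk, hθkvar⟩ := ih (le_of_lt (Nat.lt_of_lt_of_le (Nat.lt_succ_self k) hk1))
      set u : ℝ := (k:ℝ)/N with hu
      set u' : ℝ := ((k+1:ℕ):ℝ)/N with hu'
      have hu0 : 0 ≤ u := by positivity
      have huu' : u ≤ u' := by rw [hu, hu']; gcongr <;> push_cast <;> linarith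
      have hu'1 : u' ≤ 1 := by rw [hu', div_le_one hN0]; exact_mod_cast hk1
      have hu1 : u ≤ 1 := le_trans huu' hu'1
      have hu'0 : 0 ≤ u' := by positivity
      have humem : u ∈ Icc (0:ℝ) 1 := ⟨hu0, hu1⟩
      have hu'mem : u' ∈ Icc (0:ℝ) 1 := ⟨hu'0, hu'1⟩
      obtain ⟨θ', hθ'c, hθ'⟩ := lift_exists (hslice u' hu'mem) (hslicene u' hu'mem)
      refine ⟨θ', hθ'c, hθ', ?_⟩
      have hvar : θ' 1 - θ' 0 = θk 1 - θk 0 := by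
        apply lift_variation_eq_of_close (hslice u' hu'mem) (hslice u humem) ?_ hθ'c hθkc hθ' hθk
        · rw [hend0 u' hu'mem, hend0 u humem]
        · rw [hend1 u' hu'mem, hend1 u humem]
        · intro t ht
          have hdist : dist (u', t) (u, t) < δ := by
            rw [Prod.dist_eq]
            simp only [dist_self]
            have hd1 : dist u' u < δ := by
              rw [Real.dist_eq, _root_.abs_of_nonneg (sub_nonneg.mpr huu')]
              have h2 : u' - u = 1 / N := by rw [hu, hu']; push_cast; field_simp; ring
              rw [h2]; exact hNδ
            exact max_lt hd1 hδ0
          have := hδ (u', t) (mk_mem_prod hu'mem ht) (u, t) (mk_mem_prod humem ht) hdist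
          rw [dist_eq_norm] at this
          exact lt_of_lt_of_le this (hmle (u, t) (mk_mem_prod humem ht))
      rw [hvar, hθkvar]
  obtain ⟨θ', hθ'c, hθ', hθ'var⟩ := key N (le_refl N)
  have hNN : ((N:ℝ)/N) = 1 := div_self (ne_of_gt hN0)
  rw [hNN] at hθ'
  have := lift_unique isPreconnected_Icc hθb hθ'c
    (fun t ht => exp_eq_of_lifts (hslicene 1 (Set.right_mem_Icc.mpr zero_le_one) t ht) (hliftb t ht) (hθ' t ht))
    (Set.right_mem_Icc.mpr zero_le_one) (Set.left_mem_Icc.mpr zero_le_one)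
  have hbv : θb 1 - θb 0 = θ' 1 - θ' 0 := by linarith
  rw [hbv, hθ'var]
noncomputable def secAvg (dΓ : ℝ → ℂ) (s t : ℝ) : ℂ := ∫ r in Icc (0:ℝ) 1, dΓ (s + r * (t - s))

lemma secAvg_continuous {dΓ : ℝ → ℂ} (hC1 : Continuous dΓ) :
    Continuous (fun p : ℝ × ℝ => secAvg dΓ p.1 p.2) := by
  have hc : Continuous (Function.uncurry fun (p : ℝ × ℝ) (r : ℝ) => dΓ (p.1 + r * (p.2 - p.1))) := by
    apply hC1.comp
    fun_prop
  exact continuous_parametric_integral_of_continuous hc isCompact_Icc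

lemma secAvg_diag (dΓ : ℝ → ℂ) (t : ℝ) : secAvg dΓ t t = dΓ t := by
  simp only [secAvg, sub_self, mul_zero, add_zero]
  rw [MeasureTheory.setIntegral_const]
  simp [Real.volume_Icc]

lemma secAvg_eq {dΓ : ℝ → ℂ} (hC1 : Continuous dΓ) {s t : ℝ} (hst : s ≠ t) :
    secAvg dΓ s t = (t - s)⁻¹ • ∫ u in s..t, dΓ u := by
  have h1 : secAvg dΓ s t = ∫ r in (0:ℝ)..1, dΓ (s + r * (t - s)) := by
    rw [secAvg, MeasureTheory.integral_Icc_eq_integral_Ioc,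
      ← intervalIntegral.integral_of_le zero_le_one]
  rw [h1]
  have h2 : (fun r => dΓ (s + r * (t - s))) = (fun r => dΓ ((t - s) * r + s)) := by
    funext r; ring_nf
  rw [h2, intervalIntegral.integral_comp_mul_add _ (sub_ne_zero.mpr (Ne.symm hst))]
  norm_num
lemma dir_smul_pos {k : ℝ} (hk : 0 < k) {z : ℂ} (hz : z ≠ 0) :
    ‖k • z‖⁻¹ • (k • z) = ‖z‖⁻¹ • z := by
  rw [norm_smul, Real.norm_eq_abs, _root_.abs_of_pos hk, smul_smul]
  congr 1
  rw [mul_inv, mul_comm k⁻¹, mul_assoc, inv_mul_cancel₀ (ne_of_gt hk), mul_one]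

lemma dir_neg (z : ℂ) : ‖-z‖⁻¹ • (-z) = -(‖z‖⁻¹ • z) := by
  rw [norm_neg, smul_neg]

set_option maxHeartbeats 2000000 in
theorem umlauf_aux (Γ dΓ : ℝ → ℂ) (Θ : ℝ → ℝ)
    (hC1 : Continuous dΓ)
    (hFTC : ∀ s ∈ Icc (0:ℝ) 1, ∀ t ∈ Icc (0:ℝ) 1, Γ t - Γ s = ∫ u in s..t, dΓ u)
    (hclosed : Γ 0 = Γ 1) (hclosed' : dΓ 0 = dΓ 1)
    (hreg : ∀ t ∈ Icc (0:ℝ) 1, dΓ t ≠ 0)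
    (hsimple : InjOn Γ (Ico (0:ℝ) 1))
    (hΘcont : ContinuousOn Θ (Icc (0:ℝ) 1))
    (hΘ : ∀ t ∈ Icc (0:ℝ) 1, dΓ t = (‖dΓ t‖:ℂ) * Complex.exp ((Θ t :ℂ) * I))
    (hmin : ∀ t ∈ Icc (0:ℝ) 1, (Γ 0).im ≤ (Γ t).im) :
    Θ 1 - Θ 0 = 2*Real.pi ∨ Θ 1 - Θ 0 = -(2*Real.pi) := by
  set G : ℝ → ℝ → ℂ := secAvg dΓ with hG
  have hGc : Continuous (fun p : ℝ × ℝ => G p.1 p.2) := secAvg_continuous hC1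
  have hg : ∀ s ∈ Icc (0:ℝ) 1, ∀ t ∈ Icc (0:ℝ) 1, s ≠ t →
      G s t = (t - s)⁻¹ • (Γ t - Γ s) := by
    intro s hs t ht hst
    simp only [hG]
    rw [secAvg_eq hC1 hst, ← hFTC s hs t ht]
  have hgsmul : ∀ s ∈ Icc (0:ℝ) 1, ∀ t ∈ Icc (0:ℝ) 1,
      (t - s) • G s t = Γ t - Γ s := by
    intro s hs t ht
    rcases eq_or_ne s t with rfl | hst
    · simp
    · rw [hg s hs t ht hst, smul_inv_smul₀ (sub_ne_zero.mpr (Ne.symm hst))]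
  set T : Set (ℝ × ℝ) := {p | 0 ≤ p.1 ∧ p.1 ≤ p.2 ∧ p.2 ≤ 1} with hT
  have hTsub : ∀ p ∈ T, p.1 ∈ Icc (0:ℝ) 1 ∧ p.2 ∈ Icc (0:ℝ) 1 := by
    intro p hp
    exact ⟨⟨hp.1, le_trans hp.2.1 hp.2.2⟩, ⟨le_trans hp.1 hp.2.1, hp.2.2⟩⟩
  have hgne : ∀ p ∈ T, p ≠ ((0:ℝ),(1:ℝ)) → G p.1 p.2 ≠ 0 := by
    rintro ⟨s, t⟩ hp hp01
    obtain ⟨hs, ht⟩ := hTsub _ hp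
    simp only [hT, mem_setOf_eq] at hp
    simp only at hs ht hp ⊢
    have hp01' : ¬ (s = 0 ∧ t = 1) := by
      rintro ⟨a, b⟩; exact hp01 (by rw [a, b])
    rcases eq_or_lt_of_le hp.2.1 with heq | hlt
    · rw [← heq]
      simp only [hG]
      rw [secAvg_diag]
      exact hreg s hs
    · rw [hg s hs t ht (ne_of_lt hlt)]
      intro hzero
      have h2 : Γ t - Γ s = 0 := by
        have := congrArg (fun z => (t - s) • z) hzero
        simp only [smul_zero] at this
        rwa [smul_inv_smul₀ (sub_ne_zero.mpr (ne_of_gt hlt))] at this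
      have h3 : Γ t = Γ s := by linear_combination h2
      rcases eq_or_lt_of_le ht.2 with ht1 | ht1
      · have hs0 : s ≠ 0 := fun hs0 => hp01' ⟨hs0, ht1⟩
        have hΓs : Γ s = Γ 0 := by rw [← h3, ht1, ← hclosed]
        exact hs0 (hsimple ⟨hs.1, lt_of_lt_of_le hlt ht.2⟩ ⟨le_refl 0, zero_lt_one⟩ hΓs)
      · exact (ne_of_lt hlt) (hsimple ⟨hs.1, lt_of_lt_of_le hlt ht.2⟩ ⟨ht.1, ht1⟩ h3.symm)
  set h : ℝ × ℝ → ℂ := fun p =>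
    if p = ((0:ℝ),(1:ℝ)) then -(‖dΓ 0‖⁻¹ • dΓ 0) else ‖G p.1 p.2‖⁻¹ • G p.1 p.2 with hh
  have hd0 : dΓ 0 ≠ 0 := hreg 0 ⟨le_refl 0, zero_le_one⟩
  have hnorm : ∀ p ∈ T, ‖h p‖ = 1 := by
    intro p hp
    by_cases hp01 : p = ((0:ℝ),(1:ℝ))
    · have he : h p = -(‖dΓ 0‖⁻¹ • dΓ 0) := by simp [hh, hp01]
      rw [he, norm_neg, norm_smul, norm_inv, norm_norm]
      exact inv_mul_cancel₀ (norm_ne_zero_iff.mpr hd0)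
    · have he : h p = ‖G p.1 p.2‖⁻¹ • G p.1 p.2 := by simp [hh, hp01]
      rw [he, norm_smul, norm_inv, norm_norm]
      exact inv_mul_cancel₀ (norm_ne_zero_iff.mpr (hgne p hp hp01))
  -- continuity of h on T
  have hcont : ContinuousOn h T := by
    intro p hp
    by_cases hp01 : p = ((0:ℝ),(1:ℝ))
    · -- corner
      subst hp01
      rw [← continuousWithinAt_diff_self]
      have hval : h ((0:ℝ),(1:ℝ)) = -(‖dΓ 0‖⁻¹ • dΓ 0) := by
        simp [hh]
      -- v tends to dΓ 0
      have hA : ContinuousAt (fun s : ℝ => G 0 s) 0 :=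
        (hGc.comp (continuous_const.prodMk continuous_id)).continuousAt
      have hB : ContinuousAt (fun t : ℝ => G t 1) 1 :=
        (hGc.comp (continuous_id.prodMk continuous_const)).continuousAt
      have hA0 : G 0 0 = dΓ 0 := secAvg_diag dΓ 0
      have hB1 : G 1 1 = dΓ 0 := by simp only [hG]; rw [secAvg_diag, ← hclosed']
      set v : ℝ × ℝ → ℂ := fun q =>
        (q.1 + 1 - q.2)⁻¹ • (q.1 • G 0 q.1 + (1 - q.2) • G q.2 1) with hv
      have hcpos : ∀ q ∈ T \ {((0:ℝ),(1:ℝ))}, 0 < q.1 + 1 - q.2 := by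
        rintro ⟨s, t⟩ ⟨hq, hq01⟩
        rcases lt_or_eq_of_le (show s + 1 - t ≥ 0 by
          have := hq.2.2; have := hq.1; simp only at *; linarith) with hlt | heq
        · exact hlt
        · exfalso
          apply hq01
          have h1 : s = 0 ∧ t = 1 := by
            constructor <;> [linarith [hq.1, hq.2.2, heq.symm]; linarith [hq.1, hq.2.2, heq.symm]]
          simp only [mem_singleton_iff]
          exact Prod.ext_iff.mpr ⟨h1.1, h1.2⟩
      have hvten : Filter.Tendsto v (nhdsWithin ((0:ℝ),(1:ℝ)) (T \ {((0:ℝ),(1:ℝ))})) (nhds (dΓ 0)) := by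
        rw [Metric.tendsto_nhdsWithin_nhds]
        intro ε hε
        obtain ⟨δ₁, hδ₁0, hδ₁⟩ := Metric.continuousAt_iff.mp hA (ε/2) (by linarith)
        obtain ⟨δ₂, hδ₂0, hδ₂⟩ := Metric.continuousAt_iff.mp hB (ε/2) (by linarith)
        refine ⟨min δ₁ δ₂, lt_min hδ₁0 hδ₂0, ?_⟩
        rintro ⟨s, t⟩ hq hdist
        rw [Prod.dist_eq, max_lt_iff] at hdist
        obtain ⟨hds, hdt⟩ := hdist
        have hs1 : dist s 0 < δ₁ := lt_of_lt_of_le hds (min_le_left _ _)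
        have ht2 : dist t 1 < δ₂ := lt_of_lt_of_le hdt (min_le_right _ _)
        have hAd : ‖G 0 s - dΓ 0‖ < ε/2 := by
          have := hδ₁ hs1
          rwa [dist_eq_norm, hA0] at this
        have hBd : ‖G t 1 - dΓ 0‖ < ε/2 := by
          have := hδ₂ ht2
          rwa [dist_eq_norm, hB1] at this
        have hc := hcpos _ hq
        simp only at hc
        set c : ℝ := s + 1 - t with hcdef
        have hs0 : 0 ≤ s := hq.1.1
        have ht1 : t ≤ 1 := hq.1.2.2
        have key : v (s, t) - dΓ 0 = c⁻¹ • (s • (G 0 s - dΓ 0) + (1 - t) • (G t 1 - dΓ 0)) := by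
          simp only [hv]
          rw [← hcdef]
          have hcinv : c⁻¹ * c = 1 := inv_mul_cancel₀ (ne_of_gt hc)
          match_scalars <;> field_simp [hcdef] <;> ring
        rw [dist_eq_norm, key]
        have hb1 : ‖s • (G 0 s - dΓ 0) + (1 - t) • (G t 1 - dΓ 0)‖ ≤ s * (ε/2) + (1-t) * (ε/2) := by
          apply le_trans (norm_add_le _ _)
          apply add_le_add
          · rw [norm_smul, Real.norm_eq_abs, _root_.abs_of_nonneg hs0]
            exact mul_le_mul_of_nonneg_left (le_of_lt hAd) hs0
          · rw [norm_smul, Real.norm_eq_abs, _root_.abs_of_nonneg (by linarith : (0:ℝ) ≤ 1 - t)]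
            exact mul_le_mul_of_nonneg_left (le_of_lt hBd) (by linarith)
        rw [norm_smul, Real.norm_eq_abs, _root_.abs_of_pos (inv_pos.mpr hc)]
        calc c⁻¹ * ‖s • (G 0 s - dΓ 0) + (1 - t) • (G t 1 - dΓ 0)‖
            ≤ c⁻¹ * (s * (ε/2) + (1-t) * (ε/2)) := by
              exact mul_le_mul_of_nonneg_left hb1 (le_of_lt (inv_pos.mpr hc))
          _ = c⁻¹ * c * (ε/2) := by rw [hcdef]; ring
          _ = ε/2 := by rw [inv_mul_cancel₀ (ne_of_gt hc), one_mul]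
          _ < ε := by linarith
      have hdirc : Filter.Tendsto (fun z : ℂ => -(‖z‖⁻¹ • z)) (nhds (dΓ 0)) (nhds (-(‖dΓ 0‖⁻¹ • dΓ 0))) := by
        apply Filter.Tendsto.neg
        exact ((continuous_norm.continuousAt.inv₀ (norm_ne_zero_iff.mpr hd0)).smul continuousAt_id)
      have hcomp := hdirc.comp hvten
      have heq : ∀ q ∈ T \ {((0:ℝ),(1:ℝ))}, dist q ((0:ℝ),(1:ℝ)) < 1/4 →
          h q = -(‖v q‖⁻¹ • v q) := by
        rintro ⟨s, t⟩ hq hdist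
        rw [Prod.dist_eq, max_lt_iff] at hdist
        have hq01 : ((s,t) : ℝ × ℝ) ≠ ((0:ℝ),(1:ℝ)) := hq.2
        have hs0 : 0 ≤ s := hq.1.1
        have ht1 : t ≤ 1 := hq.1.2.2
        have hst : s ≤ t := hq.1.2.1
        have hsmall : s < 1/4 := by
          have := hdist.1; rw [Real.dist_eq, abs_sub_lt_iff] at this; linarith [this.1]
        have htbig : 3/4 < t := by
          have := hdist.2; rw [Real.dist_eq, abs_sub_lt_iff] at this; linarith [this.1]
        have hts : 0 < t - s := by linarith
        have hc := hcpos _ hq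
        simp only at hc
        obtain ⟨hsI, htI⟩ := hTsub _ hq.1
        have hzero : (0:ℝ) ∈ Icc (0:ℝ) 1 := ⟨le_refl 0, zero_le_one⟩
        have hone : (1:ℝ) ∈ Icc (0:ℝ) 1 := ⟨zero_le_one, le_refl 1⟩
        -- w = Γ s - Γ t = -( (t-s) • G s t )
        have hid1 : s • G 0 s = Γ s - Γ 0 := by
          have := hgsmul 0 hzero s hsI
          rwa [sub_zero] at this
        have hid2 : (1 - t) • G t 1 = Γ 1 - Γ t := hgsmul t htI 1 hone
        have hid3 : (t - s) • G s t = Γ t - Γ s := hgsmul s hsI t htI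
        have hw : s • G 0 s + (1 - t) • G t 1 = -((t - s) • G s t) := by
          rw [hid1, hid2, hid3, ← hclosed]
          ring
        have hGne : G s t ≠ 0 := hgne (s,t) hq.1 hq01
        have hveq : v (s, t) = -(((s + 1 - t)⁻¹ * (t - s)) • G s t) := by
          simp only [hv]
          rw [hw, smul_neg, smul_smul]
        simp only [hh]
        rw [if_neg hq01, hveq]
        have hk : 0 < (s + 1 - t)⁻¹ * (t - s) := mul_pos (inv_pos.mpr hc) hts
        rw [norm_neg, smul_neg, neg_neg, dir_smul_pos hk hGne]
      -- conclude
      show Filter.Tendsto h (nhdsWithin ((0:ℝ),(1:ℝ)) (T \ {((0:ℝ),(1:ℝ))})) (nhds (h ((0:ℝ),(1:ℝ))))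
      rw [hval]
      apply hcomp.congr'
      have hball : Metric.ball ((0:ℝ),(1:ℝ)) (1/4) ∈ nhdsWithin ((0:ℝ),(1:ℝ)) (T \ {((0:ℝ),(1:ℝ))}) :=
        Filter.mem_of_superset (mem_nhdsWithin_of_mem_nhds (Metric.ball_mem_nhds _ (by norm_num))) (fun x hx => hx)
      filter_upwards [hball, self_mem_nhdsWithin] with q hq1 hq2
      exact (heq q hq2 (Metric.mem_ball.mp hq1)).symm
    · -- non-corner
      have hg0 : G p.1 p.2 ≠ 0 := hgne p hp hp01
      have hCA : ContinuousAt (fun q : ℝ × ℝ => ‖G q.1 q.2‖⁻¹ • G q.1 q.2) p := by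
        exact ((hGc.norm.continuousAt).inv₀ (norm_ne_zero_iff.mpr hg0)).smul hGc.continuousAt
      apply hCA.continuousWithinAt.congr_of_eventuallyEq
      · filter_upwards [mem_nhdsWithin_of_mem_nhds (isOpen_compl_singleton.mem_nhds hp01)] with q hq
        exact if_neg hq
      · exact if_neg hp01
    -- Im of dΓ 0 vanishes (basepoint is lowest point)
  have hIm0 : (dΓ 0).im = 0 := by
    have hA : ContinuousAt (fun s : ℝ => (G 0 s).im) 0 :=
      (Complex.continuous_im.comp (hGc.comp (continuous_const.prodMk continuous_id))).continuousAt
    have hB : ContinuousAt (fun t : ℝ => (G t 1).im) 1 :=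
      (Complex.continuous_im.comp (hGc.comp (continuous_id.prodMk continuous_const))).continuousAt
    have hzero : (0:ℝ) ∈ Icc (0:ℝ) 1 := ⟨le_refl 0, zero_le_one⟩
    have hone : (1:ℝ) ∈ Icc (0:ℝ) 1 := ⟨zero_le_one, le_refl 1⟩
    have h1 : 0 ≤ (dΓ 0).im := by
      have hA0 : (G 0 0).im = (dΓ 0).im := by simp only [hG]; rw [secAvg_diag]
      rw [← hA0]
      apply ge_of_tendsto (hA.continuousWithinAt (s := Ioi 0))
      filter_upwards [Ioc_mem_nhdsGT zero_lt_one] with t ht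
      have htI : t ∈ Icc (0:ℝ) 1 := ⟨le_of_lt ht.1, ht.2⟩
      rw [hg 0 hzero t htI (ne_of_lt ht.1), sub_zero, Complex.smul_im, smul_eq_mul,
        Complex.sub_im]
      exact mul_nonneg (inv_nonneg.mpr (by linarith [ht.1])) (by linarith [hmin t htI])
    have h2 : (dΓ 1).im ≤ 0 := by
      have hB1 : (G 1 1).im = (dΓ 1).im := by simp only [hG]; rw [secAvg_diag]
      rw [← hB1]
      apply le_of_tendsto (hB.continuousWithinAt (s := Iio 1))
      filter_upwards [Ico_mem_nhdsLT zero_lt_one] with t ht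
      have htI : t ∈ Icc (0:ℝ) 1 := ⟨ht.1, le_of_lt ht.2⟩
      rw [hg t htI 1 hone (ne_of_lt ht.2), Complex.smul_im, smul_eq_mul]
      have him : (Γ 1 - Γ t).im ≤ 0 := by
        rw [Complex.sub_im, ← hclosed]
        linarith [hmin t htI]
      exact mul_nonpos_of_nonneg_of_nonpos (inv_nonneg.mpr (by linarith [ht.2])) him
    rw [hclosed']
    rw [hclosed'] at h1
    linarith [h1, h2]
  have hzero : (0:ℝ) ∈ Icc (0:ℝ) 1 := ⟨le_refl 0, zero_le_one⟩
  have hone : (1:ℝ) ∈ Icc (0:ℝ) 1 := ⟨zero_le_one, le_refl 1⟩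
  have hTmem : ∀ t ∈ Icc (0:ℝ) 1, ((t,t) : ℝ × ℝ) ∈ T := fun t ht => ⟨ht.1, le_refl t, ht.2⟩
  have hT0t : ∀ t ∈ Icc (0:ℝ) 1, ((0,t) : ℝ × ℝ) ∈ T := fun t ht => ⟨le_refl 0, ht.1, ht.2⟩
  have hTt1 : ∀ t ∈ Icc (0:ℝ) 1, ((t,1) : ℝ × ℝ) ∈ T := fun t ht => ⟨ht.1, ht.2, le_refl 1⟩
  have hdiag : ∀ t ∈ Icc (0:ℝ) 1, h (t, t) = ‖dΓ t‖⁻¹ • dΓ t := by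
    intro t ht
    have hne01 : ((t, t) : ℝ × ℝ) ≠ ((0:ℝ),(1:ℝ)) := by
      intro hcon
      have h1 : t = 0 := congrArg Prod.fst hcon
      have h2 : t = 1 := congrArg Prod.snd hcon
      rw [h1] at h2
      exact zero_ne_one h2
    have he : h (t, t) = ‖G t t‖⁻¹ • G t t := by simp [hh, hne01]
    rw [he]
    simp only [hG]
    rw [secAvg_diag]
  have hedge : ∀ s ∈ Icc (0:ℝ) 1, h (s, 1) = -h (0, s) := by
    intro s hs
    rcases eq_or_lt_of_le hs.1 with hs0 | hs0
    · rw [← hs0]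
      have he1 : h ((0:ℝ), 1) = -(‖dΓ 0‖⁻¹ • dΓ 0) := by simp [hh]
      rw [he1, hdiag 0 hzero]
    · rcases eq_or_lt_of_le hs.2 with hs1 | hs1
      · rw [hs1]
        have he1 : h ((0:ℝ), 1) = -(‖dΓ 0‖⁻¹ • dΓ 0) := by simp [hh]
        rw [he1, hdiag 1 hone, neg_neg, ← hclosed']
      · have hne1 : ((s, 1) : ℝ × ℝ) ≠ ((0:ℝ),(1:ℝ)) := by
          intro hcon
          rw [Prod.ext_iff] at hcon
          simp only at hcon
          exact (ne_of_gt hs0) hcon.1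
        have hne2 : ((0, s) : ℝ × ℝ) ≠ ((0:ℝ),(1:ℝ)) := by
          intro hcon
          have h1 : s = 1 := congrArg Prod.snd hcon
          linarith
        have he1 : h (s, 1) = ‖G s 1‖⁻¹ • G s 1 := by simp [hh, hne1]
        have he2 : h (0, s) = ‖G 0 s‖⁻¹ • G 0 s := by simp [hh, hne2]
        have hgs1 : G s 1 = -(((1 - s)⁻¹ * s) • G 0 s) := by
          rw [hg s hs 1 hone (ne_of_lt hs1), hg 0 hzero s hs (ne_of_lt hs0), sub_zero, ← hclosed]
          have hsne : s ≠ 0 := ne_of_gt hs0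
          have h1s : (1:ℝ) - s ≠ 0 := by intro hcon; linarith
          have hss : s - s^2 ≠ 0 := by
            intro hcon
            have h2 : s * (1 - s) = 0 := by nlinarith
            rcases mul_eq_zero.mp h2 with h3 | h3
            · exact hsne h3
            · exact h1s h3
          match_scalars <;> field_simp [hsne, h1s, hss] <;> ring_nf
        rw [he1, he2, hgs1, dir_neg,
          dir_smul_pos (mul_pos (inv_pos.mpr (by linarith)) hs0) (hgne (0,s) (hT0t s hs) hne2)]
  have himpos : ∀ t ∈ Icc (0:ℝ) 1, 0 ≤ (h (0, t)).im := by
    intro t ht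
    rcases eq_or_lt_of_le ht.2 with ht1 | ht1
    · rw [ht1]
      have he1 : h ((0:ℝ), 1) = -(‖dΓ 0‖⁻¹ • dΓ 0) := by simp [hh]
      rw [he1, Complex.neg_im, Complex.smul_im, hIm0]
      simp
    · have hne2 : ((0, t) : ℝ × ℝ) ≠ ((0:ℝ),(1:ℝ)) := by
        intro hcon
        have h1 : t = 1 := congrArg Prod.snd hcon
        linarith
      have he2 : h (0, t) = ‖G 0 t‖⁻¹ • G 0 t := by simp [hh, hne2]
      rw [he2, Complex.smul_im, smul_eq_mul]
      apply mul_nonneg (inv_nonneg.mpr (norm_nonneg _))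
      rcases eq_or_lt_of_le ht.1 with ht0 | ht0
      · rw [← ht0]
        have hgd : (G 0 0).im = (dΓ 0).im := by simp only [hG]; rw [secAvg_diag]
        rw [hgd, hIm0]
      · rw [hg 0 hzero t ⟨ht.1, le_of_lt ht1⟩ (ne_of_lt ht0), sub_zero, Complex.smul_im,
          smul_eq_mul, Complex.sub_im]
        exact mul_nonneg (inv_nonneg.mpr (le_of_lt ht0)) (by linarith [hmin t ⟨ht.1, le_of_lt ht1⟩])
  -- homotopy from the diagonal to the two edges
  set e₁ : ℝ → ℝ := fun t => max (2*t - 1) 0 with he₁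
  set e₂ : ℝ → ℝ := fun t => min (2*t) 1 with he₂
  set F : ℝ → ℝ → ℝ × ℝ := fun u t => ((1-u)*t + u*(e₁ t), (1-u)*t + u*(e₂ t)) with hF
  have hFT : ∀ u ∈ Icc (0:ℝ) 1, ∀ t ∈ Icc (0:ℝ) 1, F u t ∈ T := by
    intro u hu t ht
    simp only [hF, he₁, he₂, hT, mem_setOf_eq]
    refine ⟨?_, ?_, ?_⟩
    · exact add_nonneg (mul_nonneg (by linarith [hu.2]) ht.1)
        (mul_nonneg hu.1 (le_max_right _ _))
    · apply add_le_add le_rfl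
      apply mul_le_mul_of_nonneg_left ?_ hu.1
      apply max_le
      · exact le_min (by linarith) (by linarith [ht.2])
      · exact le_min (by linarith [ht.1]) zero_le_one
    · nlinarith [mul_nonneg (sub_nonneg.mpr hu.2) (sub_nonneg.mpr ht.2),
        mul_nonneg hu.1 (sub_nonneg.mpr (min_le_right (2*t) (1:ℝ)))]
  set H : ℝ → ℝ → ℂ := fun u t => h (F u t) with hH
  have hHcont : ContinuousOn (fun p : ℝ × ℝ => H p.1 p.2) (Icc 0 1 ×ˢ Icc 0 1) := by
    apply hcont.comp
    · apply Continuous.continuousOn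
      simp only [hF, he₁, he₂]
      fun_prop
    · rintro ⟨u, t⟩ hp
      exact hFT u hp.1 t hp.2
  have hHne : ∀ p ∈ (Icc (0:ℝ) 1 ×ˢ Icc (0:ℝ) 1), H p.1 p.2 ≠ 0 := by
    rintro ⟨u, t⟩ hp hzero'
    have hn1 := hnorm _ (hFT u hp.1 t hp.2)
    simp only [hH] at hzero'
    rw [hzero', norm_zero] at hn1
    norm_num at hn1
  have hF0 : ∀ u : ℝ, F u 0 = ((0:ℝ),(0:ℝ)) := by
    intro u
    simp only [hF, he₁, he₂]
    refine Prod.ext_iff.mpr ⟨?_, ?_⟩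
    · simp only
      rw [max_eq_right (by norm_num : (2*(0:ℝ)-1) ≤ 0)]
      ring
    · simp only
      rw [min_eq_left (by norm_num : 2*(0:ℝ) ≤ 1)]
      ring
  have hF1 : ∀ u : ℝ, F u 1 = ((1:ℝ),(1:ℝ)) := by
    intro u
    simp only [hF, he₁, he₂]
    refine Prod.ext_iff.mpr ⟨?_, ?_⟩
    · simp only
      rw [max_eq_left (by norm_num : (0:ℝ) ≤ 2*(1:ℝ)-1)]
      ring
    · simp only
      rw [min_eq_right (by norm_num : (1:ℝ) ≤ 2*(1:ℝ))]
      ring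
  have hend0 : ∀ u ∈ Icc (0:ℝ) 1, H u 0 = H 0 0 := by
    intro u hu
    simp only [hH]
    rw [hF0 u, hF0 0]
  have hend1 : ∀ u ∈ Icc (0:ℝ) 1, H u 1 = H 0 1 := by
    intro u hu
    simp only [hH]
    rw [hF1 u, hF1 0]
  have hlifta : ∀ t ∈ Icc (0:ℝ) 1, H 0 t = (‖H 0 t‖:ℂ) * Complex.exp ((Θ t : ℂ) * I) := by
    intro t ht
    have hd : dΓ t ≠ 0 := hreg t ht
    have hdn : (‖dΓ t‖:ℂ) ≠ 0 := by
      simp only [ne_eq, Complex.ofReal_eq_zero, norm_eq_zero]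
      exact hd
    have hinv : ((‖dΓ t‖:ℂ))⁻¹ * (‖dΓ t‖:ℂ) = 1 := inv_mul_cancel₀ hdn
    have h1 : H 0 t = ‖dΓ t‖⁻¹ • dΓ t := by
      have hFt : F 0 t = (t, t) := by
        simp only [hF]
        exact Prod.ext_iff.mpr ⟨by ring, by ring⟩
      simp only [hH]
      rw [hFt]
      exact hdiag t ht
    have h2 : ‖H 0 t‖ = 1 := by
      rw [h1, norm_smul, norm_inv, norm_norm, inv_mul_cancel₀ (norm_ne_zero_iff.mpr hd)]
    rw [h2, h1, Complex.real_smul]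
    push_cast
    linear_combination ((‖dΓ t‖:ℂ))⁻¹ * hΘ t ht + Complex.exp ((Θ t:ℂ)*I) * hinv
  have hH1cont : ContinuousOn (H 1) (Icc 0 1) := by
    have hmap : ∀ t ∈ Icc (0:ℝ) 1, ((1:ℝ), t) ∈ (Icc (0:ℝ) 1 ×ˢ Icc (0:ℝ) 1) :=
      fun t ht => mk_mem_prod hone ht
    exact hHcont.comp ((continuous_const.prodMk continuous_id).continuousOn) hmap
  have hH1ne : ∀ t ∈ Icc (0:ℝ) 1, H 1 t ≠ 0 := fun t ht => hHne (1, t) (mk_mem_prod hone ht)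
  obtain ⟨η, hηc, hηlift⟩ := lift_exists hH1cont hH1ne
  have hηvar : η 1 - η 0 = Θ 1 - Θ 0 :=
    homotopy_invariance hHcont hHne hend0 hend1 hΘcont hηc hlifta hηlift
  -- the two edge pieces
  have hF1a : ∀ t ∈ Icc (0:ℝ) 1, F 1 (t/2) = ((0:ℝ), t) := by
    intro t ht
    simp only [hF, he₁, he₂]
    refine Prod.ext_iff.mpr ⟨?_, ?_⟩
    · simp only
      rw [max_eq_right (by linarith [ht.2] : 2*(t/2) - 1 ≤ 0)]
      ring
    · simp only
      rw [min_eq_left (by linarith [ht.2] : 2*(t/2) ≤ 1)]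
      ring
  have hF1b : ∀ t ∈ Icc (0:ℝ) 1, F 1 ((1+t)/2) = (t, (1:ℝ)) := by
    intro t ht
    simp only [hF, he₁, he₂]
    refine Prod.ext_iff.mpr ⟨?_, ?_⟩
    · simp only
      rw [max_eq_left (by linarith [ht.1] : (0:ℝ) ≤ 2*((1+t)/2) - 1)]
      ring
    · simp only
      rw [min_eq_right (by linarith [ht.1] : (1:ℝ) ≤ 2*((1+t)/2))]
      ring
  set φ : ℝ → ℝ := fun t => η (t/2) with hφ
  set ψ : ℝ → ℝ := fun t => η ((1+t)/2) with hψ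
  have hφc : ContinuousOn φ (Icc 0 1) := by
    apply hηc.comp (Continuous.continuousOn (by fun_prop) : ContinuousOn (fun t : ℝ => t/2) (Icc 0 1))
    intro t ht
    exact ⟨by linarith [ht.1], by linarith [ht.2]⟩
  have hψc : ContinuousOn ψ (Icc 0 1) := by
    apply hηc.comp (Continuous.continuousOn (by fun_prop) : ContinuousOn (fun t : ℝ => (1+t)/2) (Icc 0 1))
    intro t ht
    exact ⟨by linarith [ht.1], by linarith [ht.2]⟩
  have hexpφ : ∀ t ∈ Icc (0:ℝ) 1, Complex.exp ((φ t :ℂ) * I) = h (0, t) := by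
    intro t ht
    have hmem : t/2 ∈ Icc (0:ℝ) 1 := ⟨by linarith [ht.1], by linarith [ht.2]⟩
    have h3 := hηlift (t/2) hmem
    simp only [hH] at h3
    rw [hF1a t ht, hnorm _ (hT0t t ht)] at h3
    simp only [hφ]
    rw [h3]
    norm_num
  have hexpψ : ∀ t ∈ Icc (0:ℝ) 1, Complex.exp ((ψ t :ℂ) * I) = h (t, 1) := by
    intro t ht
    have hmem : (1+t)/2 ∈ Icc (0:ℝ) 1 := ⟨by linarith [ht.1], by linarith [ht.2]⟩
    have h3 := hηlift ((1+t)/2) hmem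
    simp only [hH] at h3
    rw [hF1b t ht, hnorm _ (hTt1 t ht)] at h3
    simp only [hψ]
    rw [h3]
    norm_num
  have hψφ : ∀ t ∈ Icc (0:ℝ) 1, Complex.exp ((ψ t :ℂ) * I)
      = Complex.exp ((((fun t => φ t + Real.pi) t :ℝ):ℂ) * I) := by
    intro t ht
    rw [hexpψ t ht, hedge t ht, ← hexpφ t ht]
    push_cast
    rw [add_mul, Complex.exp_add, Complex.exp_pi_mul_I]
    ring
  have huniq := lift_unique isPreconnected_Icc hψc (hφc.add continuousOn_const) hψφ hone hzero
  have hφ1 : φ 1 = η (1/2) := by norm_num [hφ]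
  have hφ0 : φ 0 = η 0 := by norm_num [hφ]
  have hψ1 : ψ 1 = η 1 := by norm_num [hψ]
  have hψ0 : ψ 0 = η (1/2) := by norm_num [hψ]
  have hsinφ : ∀ t ∈ Icc (0:ℝ) 1, 0 ≤ Real.sin (φ t) := by
    intro t ht
    have h4 : Real.sin (φ t) = (Complex.exp ((φ t :ℂ) * I)).im := by
      simp [Complex.exp_im]
    rw [h4, hexpφ t ht]
    exact himpos t ht
  have hvar := variation_lt_two_pi hφc hsinφ
  have hφ10 : Complex.exp ((φ 1:ℂ) * I) = Complex.exp (((φ 0 + Real.pi :ℝ):ℂ) * I) := by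
    rw [hexpφ 1 hone, hedge 0 hzero, ← hexpφ 0 hzero]
    push_cast
    rw [add_mul, Complex.exp_add, Complex.exp_pi_mul_I]
    ring
  obtain ⟨n, hn⟩ := exp_eq_exp_sub _ _ hφ10
  have hΔ : φ 1 - φ 0 = Real.pi + n * (2*Real.pi) := by linarith [hn]
  have hππ := Real.pi_pos
  have hn0 : n = 0 ∨ n = -1 := by
    have habs := abs_lt.mp hvar
    have h5 : (n:ℝ) < 1/2 := by nlinarith [habs.2]
    have h6 : (-3/2 :ℝ) < n := by nlinarith [habs.1]
    have h7 : n < 1 := by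
      have : (n:ℝ) < 1 := by linarith
      exact_mod_cast this
    have h8 : (-2:ℤ) < n := by
      have : (-2:ℝ) < n := by linarith
      exact_mod_cast this
    omega
  have hfinal : Θ 1 - Θ 0 = 2 * (φ 1 - φ 0) := by
    have e1 : ψ 1 - ψ 0 = φ 1 - φ 0 := by
      have h' : ψ 1 - (φ 1 + Real.pi) = ψ 0 - (φ 0 + Real.pi) := huniq
      linarith [h']
    have e2 : η 1 - η 0 = (ψ 1 - ψ 0) + (φ 1 - φ 0) := by
      rw [hψ1, hψ0, hφ1, hφ0]; ring
    linarith [hηvar, e1, e2]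
  rcases hn0 with hn0 | hn0
  · left
    rw [hfinal, hΔ, hn0]
    push_cast
    ring
  · right
    rw [hfinal, hΔ, hn0]
    push_cast
    ring

set_option maxHeartbeats 1000000 in
/-- Theorem of turning tangents (Umlaufsatz): for a `C¹` simple closed plane curve
`γ : [0,1] → ℝ² ≃ ℂ` with nowhere-vanishing tangent, a continuous determination
`θ` of the angle of the tangent with the positive x-axis satisfies
`∫₀¹ θ′ = θ(1) − θ(0) = ±2π`. -/
theorem turning_tangents
    (γ dγ : ℝ → ℂ) (θ : ℝ → ℝ)
    (hderiv : ∀ t, HasDerivAt γ (dγ t) t)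
    (hC1 : Continuous dγ)
    (hclosed : γ 0 = γ 1) (hclosed' : dγ 0 = dγ 1)
    (hreg : ∀ t ∈ Icc (0 : ℝ) 1, dγ t ≠ 0)
    (hsimple : InjOn γ (Ico (0 : ℝ) 1))
    (hθcont : ContinuousOn θ (Icc (0 : ℝ) 1))
    (hθ : ∀ t ∈ Icc (0 : ℝ) 1,
      dγ t = (‖dγ t‖ : ℂ) * Complex.exp ((θ t : ℂ) * Complex.I)) :
    θ 1 - θ 0 = 2 * Real.pi ∨ θ 1 - θ 0 = -(2 * Real.pi) := by
  have hγcont : Continuous γ := by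
    rw [continuous_iff_continuousAt]
    intro t
    exact (hderiv t).continuousAt
  have hFTCγ : ∀ a b : ℝ, γ b - γ a = ∫ u in a..b, dγ u := by
    intro a b
    exact (intervalIntegral.integral_eq_sub_of_hasDerivAt (fun x _ => hderiv x)
      (hC1.intervalIntegrable a b)).symm
  obtain ⟨t₁, ht₁, hmin₁⟩ := isCompact_Icc.exists_isMinOn
    (⟨0, by norm_num⟩ : (Icc (0:ℝ) 1).Nonempty)
    (Complex.continuous_im.comp hγcont).continuousOn
  set t₀ : ℝ := if t₁ = 1 then 0 else t₁ with ht₀def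
  have ht₀Ico : t₀ ∈ Ico (0:ℝ) 1 := by
    rw [ht₀def]
    split_ifs with hcase
    · exact ⟨le_refl 0, zero_lt_one⟩
    · exact ⟨ht₁.1, lt_of_le_of_ne ht₁.2 hcase⟩
  have hmin₀ : ∀ x ∈ Icc (0:ℝ) 1, (γ t₀).im ≤ (γ x).im := by
    intro x hx
    rw [ht₀def]
    split_ifs with hcase
    · rw [hclosed, ← hcase]
      exact hmin₁ hx
    · exact hmin₁ hx
  set c : ℝ := 1 - t₀ with hcdef
  have hc0 : 0 < c := by rw [hcdef]; linarith [ht₀Ico.2]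
  have hc1 : c ≤ 1 := by rw [hcdef]; linarith [ht₀Ico.1]
  have hct₀ : c + t₀ = 1 := by rw [hcdef]; ring
  set Δ : ℝ := θ 1 - θ 0 with hΔdef
  set Γ : ℝ → ℂ := fun t => γ (min t c + t₀) + γ (max t c + t₀ - 1) - γ 0 with hΓdef
  set dΓ : ℝ → ℂ := fun t => dγ (min t c + t₀) + dγ (max t c + t₀ - 1) - dγ 0 with hdΓdef
  set Θ : ℝ → ℝ := fun t => θ (min t c + t₀) + θ (max t c + t₀ - 1) - θ 0 with hΘdef
  have hzt : c + t₀ - 1 = 0 := by rw [hcdef]; ring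
  have hΓle : ∀ t, t ≤ c → Γ t = γ (t + t₀) := by
    intro t htc
    simp only [hΓdef]
    rw [min_eq_left htc, max_eq_right htc, hzt, add_sub_cancel_right]
  have hΓge : ∀ t, c ≤ t → Γ t = γ (t + t₀ - 1) := by
    intro t htc
    simp only [hΓdef]
    rw [min_eq_right htc, max_eq_left htc, hct₀, ← hclosed, add_sub_cancel_left]
  have hdΓle : ∀ t, t ≤ c → dΓ t = dγ (t + t₀) := by
    intro t htc
    simp only [hdΓdef]
    rw [min_eq_left htc, max_eq_right htc, hzt, add_sub_cancel_right]
  have hdΓge : ∀ t, c ≤ t → dΓ t = dγ (t + t₀ - 1) := by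
    intro t htc
    simp only [hdΓdef]
    rw [min_eq_right htc, max_eq_left htc, hct₀, ← hclosed', add_sub_cancel_left]
  have hΘle : ∀ t, t ≤ c → Θ t = θ (t + t₀) := by
    intro t htc
    simp only [hΘdef]
    rw [min_eq_left htc, max_eq_right htc, hzt, add_sub_cancel_right]
  have hΘge : ∀ t, c ≤ t → Θ t = θ (t + t₀ - 1) + Δ := by
    intro t htc
    simp only [hΘdef]
    rw [min_eq_right htc, max_eq_left htc, hct₀, hΔdef]
    ring
  have hexpθ : Complex.exp ((θ 0 : ℂ) * I) = Complex.exp ((θ 1 : ℂ) * I) := by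
    have h0 := hθ 0 ⟨le_refl 0, zero_le_one⟩
    have h1 := hθ 1 ⟨zero_le_one, le_refl 1⟩
    rw [hclosed'] at h0
    have hne : ((‖dγ 1‖:ℝ):ℂ) ≠ 0 := by
      simp only [ne_eq, Complex.ofReal_eq_zero, norm_eq_zero]
      exact hreg 1 ⟨zero_le_one, le_refl 1⟩
    exact mul_left_cancel₀ hne (h0.symm.trans h1)
  have hexpΔ : Complex.exp ((Δ : ℂ) * I) = 1 := by
    rw [hΔdef]
    push_cast
    rw [sub_mul, Complex.exp_sub, ← hexpθ, div_self (Complex.exp_ne_zero _)]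
  have hdΓc : Continuous dΓ := by
    simp only [hdΓdef]
    apply Continuous.sub ?_ continuous_const
    apply Continuous.add
    · exact hC1.comp ((continuous_id.min continuous_const).add continuous_const)
    · exact hC1.comp (((continuous_id.max continuous_const).add continuous_const).sub continuous_const)
  have hP : ∀ t : ℝ, Γ t - Γ 0 = ∫ u in (0:ℝ)..t, dΓ u := by
    intro t
    rcases le_or_gt t c with htc | htc
    · have hcongr : EqOn dΓ (fun u => dγ (u + t₀)) (uIcc (0:ℝ) t) := by
        intro u hu
        apply hdΓle u
        rcases le_total 0 t with hle | hle
        · rw [uIcc_of_le hle] at hu; exact le_trans hu.2 htc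
        · rw [uIcc_of_ge hle] at hu; exact le_trans hu.2 (le_of_lt hc0)
      rw [intervalIntegral.integral_congr hcongr, intervalIntegral.integral_comp_add_right _ t₀,
        zero_add, ← hFTCγ t₀ (t + t₀), hΓle t htc, hΓle 0 (le_of_lt hc0), zero_add]
    · have hsplit : (∫ u in (0:ℝ)..c, dΓ u) + (∫ u in c..t, dΓ u) = ∫ u in (0:ℝ)..t, dΓ u :=
        intervalIntegral.integral_add_adjacent_intervals
          (hdΓc.intervalIntegrable 0 c) (hdΓc.intervalIntegrable c t)
      rw [← hsplit]
      have h1 : ∫ u in (0:ℝ)..c, dΓ u = γ 1 - γ t₀ := by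
        have hcongr : EqOn dΓ (fun u => dγ (u + t₀)) (uIcc (0:ℝ) c) := by
          intro u hu
          rw [uIcc_of_le (le_of_lt hc0)] at hu
          exact hdΓle u hu.2
        rw [intervalIntegral.integral_congr hcongr, intervalIntegral.integral_comp_add_right _ t₀,
          zero_add, ← hFTCγ t₀ (c + t₀), hct₀]
      have h2 : ∫ u in c..t, dΓ u = γ (t + t₀ - 1) - γ 0 := by
        have hcongr : EqOn dΓ (fun u => dγ (u + (t₀ - 1))) (uIcc c t) := by
          intro u hu
          rw [uIcc_of_le (le_of_lt htc)] at hu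
          rw [hdΓge u hu.1]
          congr 1
          ring
        rw [intervalIntegral.integral_congr hcongr, intervalIntegral.integral_comp_add_right _ (t₀-1),
          ← hFTCγ (c + (t₀ - 1)) (t + (t₀ - 1))]
        rw [show c + (t₀ - 1) = 0 from by rw [hcdef]; ring]
        congr 2
        ring
      rw [h1, h2, hΓle 0 (le_of_lt hc0), zero_add, hΓge t (le_of_lt htc), ← hclosed]
      ring
  have hFTCΓ : ∀ s ∈ Icc (0:ℝ) 1, ∀ t ∈ Icc (0:ℝ) 1, Γ t - Γ s = ∫ u in s..t, dΓ u := by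
    intro s _ t _
    have h3 : Γ t - Γ s = (Γ t - Γ 0) - (Γ s - Γ 0) := by ring
    rw [h3, hP t, hP s, intervalIntegral.integral_interval_sub_left
      (hdΓc.intervalIntegrable 0 t) (hdΓc.intervalIntegrable 0 s)]
  have hclosedΓ : Γ 0 = Γ 1 := by
    rw [hΓle 0 (le_of_lt hc0), hΓge 1 hc1, zero_add]
    congr 1
    ring
  have hclosed'Γ : dΓ 0 = dΓ 1 := by
    rw [hdΓle 0 (le_of_lt hc0), hdΓge 1 hc1, zero_add]
    congr 1
    ring
  have hregΓ : ∀ t ∈ Icc (0:ℝ) 1, dΓ t ≠ 0 := by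
    intro t ht
    rcases le_or_gt t c with htc | htc
    · rw [hdΓle t htc]
      exact hreg _ ⟨by linarith [ht.1, ht₀Ico.1], by linarith [htc, hct₀]⟩
    · rw [hdΓge t (le_of_lt htc)]
      exact hreg _ ⟨by linarith [htc, hct₀], by linarith [ht.2, ht₀Ico.2]⟩
  have hsimpleΓ : InjOn Γ (Ico (0:ℝ) 1) := by
    have hσ : ∀ s ∈ Ico (0:ℝ) 1, Γ s = γ (if s + t₀ < 1 then s + t₀ else s + t₀ - 1) := by
      intro s _
      split_ifs with hcase
      · exact hΓle s (by linarith [hct₀])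
      · exact hΓge s (by linarith [hct₀])
    have hmem : ∀ s ∈ Ico (0:ℝ) 1, (if s + t₀ < 1 then s + t₀ else s + t₀ - 1) ∈ Ico (0:ℝ) 1 := by
      intro s hsI
      split_ifs with hcase
      · exact ⟨by linarith [hsI.1, ht₀Ico.1], hcase⟩
      · exact ⟨by linarith, by linarith [hsI.2, ht₀Ico.2]⟩
    intro a ha b hb hab
    rw [hσ a ha, hσ b hb] at hab
    have hinj := hsimple (hmem a ha) (hmem b hb) hab
    by_cases hca : a + t₀ < 1 <;> by_cases hcb : b + t₀ < 1
    · rw [if_pos hca, if_pos hcb] at hinj; linarith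
    · rw [if_pos hca, if_neg hcb] at hinj
      exfalso
      linarith [ha.1, hb.2]
    · rw [if_neg hca, if_pos hcb] at hinj
      exfalso
      linarith [hb.1, ha.2]
    · rw [if_neg hca, if_neg hcb] at hinj; linarith
  have hΘcontΓ : ContinuousOn Θ (Icc (0:ℝ) 1) := by
    simp only [hΘdef]
    apply ContinuousOn.sub ?_ continuousOn_const
    apply ContinuousOn.add
    · apply hθcont.comp (Continuous.continuousOn (by fun_prop) :
        ContinuousOn (fun t : ℝ => min t c + t₀) (Icc 0 1))
      intro t ht
      dsimp only
      refine ⟨?_, ?_⟩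
      · have h4 : 0 ≤ min t c := le_min ht.1 (le_of_lt hc0)
        linarith [ht₀Ico.1]
      · have h4 : min t c ≤ c := min_le_right _ _
        linarith [hct₀]
    · apply hθcont.comp (Continuous.continuousOn (by fun_prop) :
        ContinuousOn (fun t : ℝ => max t c + t₀ - 1) (Icc 0 1))
      intro t ht
      dsimp only
      refine ⟨?_, ?_⟩
      · have h4 : c ≤ max t c := le_max_right _ _
        linarith [hct₀]
      · have h4 : max t c ≤ 1 := max_le ht.2 hc1
        linarith [ht₀Ico.2]
  have hθΓ : ∀ t ∈ Icc (0:ℝ) 1, dΓ t = (‖dΓ t‖:ℂ) * Complex.exp ((Θ t :ℂ) * I) := by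
    intro t ht
    rcases le_or_gt t c with htc | htc
    · rw [hdΓle t htc, hΘle t htc]
      exact hθ _ ⟨by linarith [ht.1, ht₀Ico.1], by linarith [htc, hct₀]⟩
    · have hu : t + t₀ - 1 ∈ Icc (0:ℝ) 1 :=
        ⟨by linarith [htc, hct₀], by linarith [ht.2, ht₀Ico.2]⟩
      rw [hdΓge t (le_of_lt htc), hΘge t (le_of_lt htc)]
      have hsplit : Complex.exp (((θ (t + t₀ - 1) + Δ :ℝ):ℂ) * I)
          = Complex.exp ((θ (t + t₀ - 1):ℂ) * I) := by
        push_cast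
        rw [add_mul, Complex.exp_add, hexpΔ, mul_one]
      rw [hsplit]
      exact hθ _ hu
  have hminΓ : ∀ t ∈ Icc (0:ℝ) 1, (Γ 0).im ≤ (Γ t).im := by
    intro t ht
    rw [hΓle 0 (le_of_lt hc0), zero_add]
    rcases le_or_gt t c with htc | htc
    · rw [hΓle t htc]
      exact hmin₀ _ ⟨by linarith [ht.1, ht₀Ico.1], by linarith [htc, hct₀]⟩
    · rw [hΓge t (le_of_lt htc)]
      exact hmin₀ _ ⟨by linarith [htc, hct₀], by linarith [ht.2, ht₀Ico.2]⟩
  have hres := umlauf_aux Γ dΓ Θ hdΓc hFTCΓ hclosedΓ hclosed'Γ hregΓ hsimpleΓ hΘcontΓ hθΓ hminΓ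
  have hΘ10 : Θ 1 - Θ 0 = Δ := by
    rw [hΘle 0 (le_of_lt hc0), hΘge 1 hc1, zero_add]
    rw [show (1:ℝ) + t₀ - 1 = t₀ from by ring]
    ring
  rcases hres with hres | hres
  · left
    rw [← hΘ10]
    exact hres
  · right
    rw [← hΘ10]
    exact hres
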